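/- Let m ≥ 1 and n ≥ 2 be integers. Then Σ_{k=1}^{n−1} H_k/((k+m)(k+m+1)) = H_m/m − (H_{n+m} − H_n)/m − H_n/(n+m), and Σ_{k=1}^{n−1} H̄_k/((k+m)(k+m+1)) = nH̄_n/((n+m)m) − H_m/m² + (H_{n+m} − H_n)/m². Moreover, Σ_{k=1}^{n−1} H_k/(k(k+1)) = H̄_n − H_n/n. Consequently, Σ_{k=1}^∞ H_k/((k+m)(k+m+1)) = H_m/m and Σ_{k=1}^∞ H̄_k/((k+m)(k+m+1)) = π²/(6m) − H_m/m². -/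

import Mathlib

open Finset Filter

/-- `n`-th harmonic number. -/
noncomputable def H (n : ℕ) : ℝ := ∑ k ∈ Finset.Icc 1 n, (1 : ℝ) / k

/-- Second-order harmonic number. -/
noncomputable def Hbar (n : ℕ) : ℝ := ∑ k ∈ Finset.Icc 1 n, (1 : ℝ) / (k : ℝ) ^ 2

lemma H_succ (n : ℕ) : H (n + 1) = H n + 1 / ((n : ℝ) + 1) := by
  unfold H; rw [Finset.sum_Icc_succ_top (by omega)]; push_cast; ring

lemma Hbar_succ (n : ℕ) : Hbar (n + 1) = Hbar n + 1 / ((n : ℝ) + 1) ^ 2 := by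
  unfold Hbar; rw [Finset.sum_Icc_succ_top (by omega)]; push_cast; ring

lemma H_one : H 1 = 1 := by simp [H]

lemma Hbar_one : Hbar 1 = 1 := by simp [Hbar]

lemma H_nonneg (n : ℕ) : 0 ≤ H n := Finset.sum_nonneg fun i _ => by positivity

lemma Hbar_nonneg (n : ℕ) : 0 ≤ Hbar n := Finset.sum_nonneg fun i _ => by positivity

lemma sum1 (m : ℕ) (hm : 1 ≤ m) (j : ℕ) :
    ∑ k ∈ Finset.Icc 1 j, H k / (((k : ℝ) + m) * ((k : ℝ) + m + 1)) =
      H m / m - (H (j + 1 + m) - H (j + 1)) / m - H (j + 1) / ((j : ℝ) + 1 + m) := by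
  induction j with
  | zero =>
    have h2 : H (0 + 1 + m) = H m + 1 / ((m : ℝ) + 1) := by
      rw [show 0 + 1 + m = m + 1 by ring, H_succ]
    rw [Finset.Icc_eq_empty (by omega), Finset.sum_empty, h2, H_one]
    have hm0 : (m : ℝ) ≠ 0 := Nat.cast_ne_zero.mpr (by omega)
    have hm1 : (m : ℝ) + 1 ≠ 0 := by positivity
    push_cast
    field_simp
    ring
  | succ j ih =>
    rw [Finset.sum_Icc_succ_top (by omega), ih]
    have e1 : H (j + 1 + 1 + m) = H (j + 1 + m) + 1 / ((j : ℝ) + 1 + m + 1) := by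
      rw [show j + 1 + 1 + m = (j + 1 + m) + 1 by ring, H_succ]
      push_cast; ring
    rw [e1, H_succ (j + 1)]
    have hm0 : (m : ℝ) ≠ 0 := Nat.cast_ne_zero.mpr (by omega)
    have h1 : ((j : ℝ) + 1 + m) ≠ 0 := by positivity
    have h2 : ((j : ℝ) + 1 + m + 1) ≠ 0 := by positivity
    have h3 : ((j : ℝ) + 1 + 1) ≠ 0 := by positivity
    push_cast
    field_simp
    ring

lemma sum2 (m : ℕ) (hm : 1 ≤ m) (j : ℕ) :
    ∑ k ∈ Finset.Icc 1 j, Hbar k / (((k : ℝ) + m) * ((k : ℝ) + m + 1)) =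
      ((j : ℝ) + 1) * Hbar (j + 1) / (((j : ℝ) + 1 + m) * m) - H m / (m : ℝ) ^ 2 +
        (H (j + 1 + m) - H (j + 1)) / (m : ℝ) ^ 2 := by
  have hm0 : (m : ℝ) ≠ 0 := Nat.cast_ne_zero.mpr (by omega)
  induction j with
  | zero =>
    have h2 : H (0 + 1 + m) = H m + 1 / ((m : ℝ) + 1) := by
      rw [show 0 + 1 + m = m + 1 by ring, H_succ]
    rw [Finset.Icc_eq_empty (by omega), Finset.sum_empty, h2, H_one,
      show (0:ℕ)+1 = 1 from rfl, Hbar_one]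
    have hm1 : (m : ℝ) + 1 ≠ 0 := by positivity
    push_cast
    field_simp
    ring
  | succ j ih =>
    rw [Finset.sum_Icc_succ_top (by omega), ih]
    have e1 : H (j + 1 + 1 + m) = H (j + 1 + m) + 1 / ((j : ℝ) + 1 + m + 1) := by
      rw [show j + 1 + 1 + m = (j + 1 + m) + 1 by ring, H_succ]
      push_cast; ring
    rw [e1, H_succ (j + 1), Hbar_succ (j + 1)]
    have h1 : ((j : ℝ) + 1 + m) ≠ 0 := by positivity
    have h2 : ((j : ℝ) + 1 + m + 1) ≠ 0 := by positivity
    have h3 : ((j : ℝ) + 1 + 1) ≠ 0 := by positivity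
    push_cast
    field_simp
    ring

lemma sum3 (j : ℕ) :
    ∑ k ∈ Finset.Icc 1 j, H k / ((k : ℝ) * ((k : ℝ) + 1)) =
      Hbar (j + 1) - H (j + 1) / ((j : ℝ) + 1) := by
  induction j with
  | zero => simp [Hbar_one, H_one]
  | succ j ih =>
    rw [Finset.sum_Icc_succ_top (by omega), ih, H_succ (j + 1), Hbar_succ (j + 1)]
    have h1 : ((j : ℝ) + 1) ≠ 0 := by positivity
    have h3 : ((j : ℝ) + 1 + 1) ≠ 0 := by positivity
    push_cast
    field_simp
    ring

lemma H_range (n : ℕ) : H n = ∑ k ∈ Finset.range n, 1 / ((k : ℝ) + 1) := by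
  unfold H
  rw [← Finset.Ico_add_one_right_eq_Icc, Finset.sum_Ico_eq_sum_range]
  simp only [Nat.add_sub_cancel]
  exact Finset.sum_congr rfl fun i _ => by push_cast; ring_nf

lemma H_diff_le (a b : ℕ) : H (a + b) - H a ≤ (b : ℝ) / ((a : ℝ) + 1) := by
  rw [H_range, H_range, ← Finset.sum_Ico_eq_sub _ (Nat.le_add_right a b)]
  calc ∑ k ∈ Finset.Ico a (a + b), 1 / ((k : ℝ) + 1)
      ≤ ∑ k ∈ Finset.Ico a (a + b), 1 / ((a : ℝ) + 1) := by
        refine Finset.sum_le_sum fun k hk => ?_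
        have : (a : ℝ) ≤ k := Nat.cast_le.mpr (Finset.mem_Ico.mp hk).1
        apply one_div_le_one_div_of_le (by positivity) (by linarith)
    _ = (b : ℝ) / ((a : ℝ) + 1) := by
        rw [Finset.sum_const, Nat.card_Ico, Nat.add_sub_cancel_left]
        simp [div_eq_mul_inv]

lemma H_diff_nonneg (a b : ℕ) : 0 ≤ H (a + b) - H a := by
  rw [H_range, H_range, ← Finset.sum_Ico_eq_sub _ (Nat.le_add_right a b)]
  exact Finset.sum_nonneg fun k _ => by positivity

lemma tendsto_H_diff (m : ℕ) :
    Tendsto (fun N : ℕ => H (N + 1 + m) - H (N + 1)) atTop (nhds 0) := by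
  apply squeeze_zero (fun N => H_diff_nonneg (N + 1) m)
    (fun N => H_diff_le (N + 1) m)
  have : Tendsto (fun N : ℕ => (m : ℝ) * (1 / ((N : ℝ) + 1 + 1))) atTop
      (nhds ((m : ℝ) * 0)) := by
    apply Tendsto.const_mul
    apply tendsto_one_div_add_atTop_nhds_zero_nat.comp (tendsto_add_atTop_nat 1) |>.congr
    intro n; simp
  simpa using this.congr fun N => by push_cast; ring

lemma H_le_log (n : ℕ) : H n ≤ 1 + Real.log n := by
  have h := harmonic_le_one_add_log n
  have : H n = (harmonic n : ℝ) := by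
    rw [harmonic_eq_sum_Icc]; push_cast [H]; simp [one_div]
  linarith [this ▸ h]

lemma tendsto_H_div (m : ℕ) :
    Tendsto (fun N : ℕ => H (N + 1) / ((N : ℝ) + 1 + m)) atTop (nhds 0) := by
  have hb : Tendsto (fun N : ℕ => (1 + Real.log ((N : ℝ) + 1)) / ((N : ℝ) + 1)) atTop
      (nhds 0) := by
    have h1 : Tendsto (fun N : ℕ => ((N : ℝ) + 1)) atTop atTop :=
      tendsto_atTop_add_const_right atTop 1 tendsto_natCast_atTop_atTop
    have hlog : Tendsto (fun x : ℝ => Real.log x / x) atTop (nhds 0) :=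
      Real.isLittleO_log_id_atTop.tendsto_div_nhds_zero
    have h2 : Tendsto (fun N : ℕ => Real.log ((N : ℝ) + 1) / ((N : ℝ) + 1)) atTop (nhds 0) :=
      hlog.comp h1
    have h3 : Tendsto (fun N : ℕ => 1 / ((N : ℝ) + 1)) atTop (nhds 0) :=
      tendsto_one_div_add_atTop_nhds_zero_nat
    have := h3.add h2
    simpa [add_div] using this
  apply squeeze_zero (fun N => div_nonneg (H_nonneg _) (by positivity)) _ hb
  intro N
  have h1 : H (N + 1) ≤ 1 + Real.log ((N : ℝ) + 1) := by
    have := H_le_log (N + 1); push_cast at this ⊢; linarith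
  have h2 : (0 : ℝ) < (N : ℝ) + 1 := by positivity
  have h3 : ((N : ℝ) + 1) ≤ (N : ℝ) + 1 + m := by
    have : (0:ℝ) ≤ m := Nat.cast_nonneg m
    linarith
  have h0 : (0:ℝ) ≤ 1 + Real.log ((N : ℝ) + 1) := le_trans (H_nonneg _) h1
  exact div_le_div₀ h0 h1 h2 h3

lemma Hbar_range (n : ℕ) : Hbar n = ∑ k ∈ Finset.range n, 1 / ((k : ℝ) + 1) ^ 2 := by
  unfold Hbar
  rw [← Finset.Ico_add_one_right_eq_Icc, Finset.sum_Ico_eq_sum_range]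
  simp only [Nat.add_sub_cancel]
  exact Finset.sum_congr rfl fun i _ => by push_cast; ring_nf

lemma tendsto_Hbar : Tendsto (fun N : ℕ => Hbar N) atTop (nhds (Real.pi ^ 2 / 6)) := by
  have h0 : HasSum (fun n : ℕ => (1 : ℝ) / ((n : ℝ) + 1) ^ 2) (Real.pi ^ 2 / 6) := by
    have h2 := hasSum_zeta_two
    have h3 := (hasSum_nat_add_iff' (f := fun n : ℕ => (1 : ℝ) / (n : ℝ) ^ 2) 1).mpr h2
    simpa using h3
  exact h0.tendsto_sum_nat.congr fun N => (Hbar_range N).symm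

theorem harmonic_partial_fraction_sums (m n : ℕ) (hm : 1 ≤ m) (hn : 2 ≤ n) :
    (∑ k ∈ Finset.Icc 1 (n - 1), H k / (((k : ℝ) + m) * ((k : ℝ) + m + 1)) =
        H m / m - (H (n + m) - H n) / m - H n / ((n : ℝ) + m)) ∧
    (∑ k ∈ Finset.Icc 1 (n - 1), Hbar k / (((k : ℝ) + m) * ((k : ℝ) + m + 1)) =
        (n : ℝ) * Hbar n / (((n : ℝ) + m) * m) - H m / (m : ℝ) ^ 2 +
          (H (n + m) - H n) / (m : ℝ) ^ 2) ∧
    (∑ k ∈ Finset.Icc 1 (n - 1), H k / ((k : ℝ) * ((k : ℝ) + 1)) = Hbar n - H n / n) ∧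
    HasSum (fun k : ℕ => H (k + 1) / (((k : ℝ) + 1 + m) * ((k : ℝ) + 1 + m + 1)))
      (H m / m) ∧
    HasSum (fun k : ℕ => Hbar (k + 1) / (((k : ℝ) + 1 + m) * ((k : ℝ) + 1 + m + 1)))
      (Real.pi ^ 2 / (6 * m) - H m / (m : ℝ) ^ 2) := by
  have hmR : (m : ℝ) ≠ 0 := Nat.cast_ne_zero.mpr (by omega)
  obtain ⟨j, rfl⟩ : ∃ j, n = j + 1 := ⟨n - 1, by omega⟩
  refine ⟨?_, ?_, ?_, ?_, ?_⟩
  · rw [Nat.add_sub_cancel, sum1 m hm j]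
    push_cast
    ring
  · rw [Nat.add_sub_cancel, sum2 m hm j]
    push_cast
    ring
  · rw [Nat.add_sub_cancel, sum3 j]
    push_cast
    ring
  · have key : ∀ N : ℕ,
        ∑ k ∈ Finset.range N, H (k + 1) / (((k : ℝ) + 1 + m) * ((k : ℝ) + 1 + m + 1)) =
        H m / m - (H (N + 1 + m) - H (N + 1)) / m - H (N + 1) / ((N : ℝ) + 1 + m) := by
      intro N
      rw [← sum1 m hm N, ← Finset.Ico_add_one_right_eq_Icc, Finset.sum_Ico_eq_sum_range]
      simp only [Nat.add_sub_cancel]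
      exact Finset.sum_congr rfl fun i _ => by
        rw [Nat.add_comm 1 i]; push_cast; ring_nf
    rw [hasSum_iff_tendsto_nat_of_nonneg
      (fun k => div_nonneg (H_nonneg _) (by positivity)) _, tendsto_congr key]
    have t := (tendsto_const_nhds (x := H m / (m:ℝ)) (f := atTop (α := ℕ))).sub
      (((tendsto_H_diff m).div_const (m:ℝ)).add (tendsto_H_div m))
    simpa [sub_sub] using t
  · have key : ∀ N : ℕ,
        ∑ k ∈ Finset.range N, Hbar (k + 1) / (((k : ℝ) + 1 + m) * ((k : ℝ) + 1 + m + 1)) =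
        ((N : ℝ) + 1) * Hbar (N + 1) / (((N : ℝ) + 1 + m) * m) - H m / (m : ℝ) ^ 2 +
          (H (N + 1 + m) - H (N + 1)) / (m : ℝ) ^ 2 := by
      intro N
      rw [← sum2 m hm N, ← Finset.Ico_add_one_right_eq_Icc, Finset.sum_Ico_eq_sum_range]
      simp only [Nat.add_sub_cancel]
      exact Finset.sum_congr rfl fun i _ => by
        rw [Nat.add_comm 1 i]; push_cast; ring_nf
    rw [hasSum_iff_tendsto_nat_of_nonneg
      (fun k => div_nonneg (Hbar_nonneg _) (by positivity)) _, tendsto_congr key]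
    have hm0 : Tendsto (fun N : ℕ => (m : ℝ) / ((N : ℝ) + 1 + m)) atTop (nhds 0) := by
      have hb : Tendsto (fun N : ℕ => (m : ℝ) / ((N : ℝ) + 1)) atTop (nhds 0) := by
        have : Tendsto (fun N : ℕ => (m : ℝ) * (1 / ((N : ℝ) + 1))) atTop
            (nhds ((m : ℝ) * 0)) :=
          tendsto_one_div_add_atTop_nhds_zero_nat.const_mul (m : ℝ)
        simpa using this.congr fun N => by ring
      apply squeeze_zero (fun N => by positivity) (fun N => ?_) hb
      have h : ((N : ℝ) + 1) ≤ (N : ℝ) + 1 + m := by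
        have : (0:ℝ) ≤ m := Nat.cast_nonneg m
        linarith
      gcongr
    have hfrac : Tendsto (fun N : ℕ => ((N : ℝ) + 1) / ((N : ℝ) + 1 + m)) atTop (nhds 1) := by
      have := (tendsto_const_nhds (x := (1:ℝ)) (f := atTop (α := ℕ))).sub hm0
      rw [sub_zero] at this
      apply this.congr fun N => ?_
      have hd : ((N : ℝ) + 1 + m) ≠ 0 := by positivity
      field_simp
      ring
    have hHb : Tendsto (fun N : ℕ => Hbar (N + 1)) atTop (nhds (Real.pi ^ 2 / 6)) :=
      tendsto_Hbar.comp (tendsto_add_atTop_nat 1)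
    have t1 : Tendsto (fun N : ℕ => ((N : ℝ) + 1) * Hbar (N + 1) / (((N : ℝ) + 1 + m) * m))
        atTop (nhds (Real.pi ^ 2 / 6 * 1 / m)) := by
      apply ((hHb.mul hfrac).div_const (m : ℝ)).congr fun N => ?_
      have hd : ((N : ℝ) + 1 + m) ≠ 0 := by positivity
      field_simp
    have t := (t1.sub (tendsto_const_nhds (x := H m / (m : ℝ) ^ 2) (f := atTop (α := ℕ)))).add
      ((tendsto_H_diff m).div_const ((m : ℝ) ^ 2))
    convert t using 2
    field_simp
    ring
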